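/- arXiv:math/0208105 — 4 statements merged into one kernel-verified Lean document; each statement's English description precedes it below -/
import Mathlib

section
/- Let G be a compact Lie group acting linearly by orthogonal transformations on Euclidean spaces V₁ and V₂, and consider the direct sum action on V = V₁ ⊕ V₂. If p₁ ∈ V₁ is a regular point for the action (G, V₁), and p₂ ∈ V₂ is a regular point for the restricted action (G_{p₁}, V₂), then p = (p₁, p₂) is a regular point for the action (G, V). -/
/-- Let a compact Lie group `G` act orthogonally on Euclidean
spaces `V₁` and `V₂` (via `ρ₁`, `ρ₂`) and consider the direct sum action on
`V = V₁ ⊕ V₂`.  A point `x` is regular for an action when its isotropy group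
is minimal up to conjugacy.  If `p₁ ∈ V₁` is regular for `(G, V₁)` (hypothesis
`hreg₁`) and `p₂ ∈ V₂` is regular for the restricted action `(G_{p₁}, V₂)`
(hypothesis `hreg₂`: the conjugating element can be chosen in `G_{p₁}`), then
`p = (p₁, p₂)` is a regular point for the direct sum action `(G, V₁ ⊕ V₂)`,
whose isotropy groups are `G_{(q₁,q₂)} = G_{q₁} ∩ G_{q₂}`. -/
theorem regular_of_direct_sum
    {G : Type*} [Group G] [TopologicalSpace G] [IsTopologicalGroup G] [CompactSpace G]
    {V₁ V₂ : Type*}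
    [NormedAddCommGroup V₁] [InnerProductSpace ℝ V₁] [FiniteDimensional ℝ V₁]
    [NormedAddCommGroup V₂] [InnerProductSpace ℝ V₂] [FiniteDimensional ℝ V₂]
    (ρ₁ : G →* (V₁ ≃ₗᵢ[ℝ] V₁)) (ρ₂ : G →* (V₂ ≃ₗᵢ[ℝ] V₂))
    (p₁ : V₁) (p₂ : V₂)
    (hreg₁ : ∀ q₁ : V₁, ∃ g : G, ∀ h : G, ρ₁ h p₁ = p₁ → ρ₁ (g⁻¹ * h * g) q₁ = q₁)
    (hreg₂ : ∀ q₂ : V₂, ∃ g : G, ρ₁ g p₁ = p₁ ∧ ∀ h : G,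
        ρ₁ h p₁ = p₁ → ρ₂ h p₂ = p₂ →
          ρ₁ (g⁻¹ * h * g) p₁ = p₁ ∧ ρ₂ (g⁻¹ * h * g) q₂ = q₂) :
    ∀ (q₁ : V₁) (q₂ : V₂), ∃ g : G, ∀ h : G,
      ρ₁ h p₁ = p₁ → ρ₂ h p₂ = p₂ →
        ρ₁ (g⁻¹ * h * g) q₁ = q₁ ∧ ρ₂ (g⁻¹ * h * g) q₂ = q₂ := by
  intro q₁ q₂
  obtain ⟨g₁, hg₁⟩ := hreg₁ q₁
  obtain ⟨g₂, hg₂p, hg₂⟩ := hreg₂ (ρ₂ g₁ q₂)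
  refine ⟨g₂ * g₁, fun h hp₁ hp₂ => ?_⟩
  obtain ⟨hk₁, hk₂⟩ := hg₂ h hp₁ hp₂
  have key : (g₂ * g₁)⁻¹ * h * (g₂ * g₁) = g₁⁻¹ * (g₂⁻¹ * h * g₂) * g₁ := by
    group
  rw [key]
  constructor
  · exact hg₁ _ hk₁
  · have := hk₂
    simp only [map_mul] at this ⊢
    have h2 : ρ₂ g₂⁻¹ (ρ₂ h (ρ₂ g₂ (ρ₂ g₁ q₂))) = ρ₂ g₁ q₂ := by
      simpa [LinearIsometryEquiv.coe_mul] using this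
    simp only [LinearIsometryEquiv.coe_mul, Function.comp_apply] at h2 ⊢
    rw [h2]
    simp [← map_mul]
end

section
/- Let G be a compact Lie group acting isometrically on a complete Riemannian manifold M, and let Σ be a totally geodesic, connected, complete submanifold of M that is flat in the induced metric. Let N = Gp be an orbit with p ∈ Σ, v ∈ ν_p(N) ∩ T_pΣ, and γ_v the geodesic with initial velocity v (which stays in Σ). If J is an N-Jacobi field along γ_v with J(t₀) = 0 for some t₀ > 0, and the tangential part of J to Σ vanishes at t = 0, then J(t) is orthogonal to T_{γ_v(t)}Σ for all t. -/
/-- Let `G` be a compact Lie group acting isometrically on a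
complete Riemannian manifold `M` and `Σ` a totally geodesic, connected,
complete submanifold that is flat in the induced metric.  Let `N = Gp` be an
orbit with `p ∈ Σ` and `v ∈ ν_p(N) ∩ T_pΣ`, and `γ_v` the normal geodesic
(which stays in `Σ`).  Working in a parallel orthonormal frame along `γ_v`, all
tangent spaces are identified with a fixed Euclidean space `V`; `T` is the
(parallel) tangent space of `Σ`, `TN` the tangent space of the orbit, and
`R t` the Jacobi (curvature) operator along `γ_v`.  Since `Σ` is totally
geodesic, `R` preserves the splitting `T ⊕ Tᗮ` (`hRTperp`), and since `Σ` is
flat, `R` vanishes on `T` (`hRT`).  If `J` is an `N`-Jacobi field along `γ_v`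
(`hJacobi`, `hNJ0`, `hNJ`) with `J(t₀) = 0` for some `t₀ > 0` and the part of
`J` tangential to `Σ` vanishes at `t = 0` (`h0`), then `J(t)` is orthogonal to
`T_{γ_v(t)}Σ` for all `t`. -/
theorem jacobi_orthogonal_to_flat_section
    {V : Type*} [NormedAddCommGroup V] [InnerProductSpace ℝ V] [FiniteDimensional ℝ V]
    (T TN : Submodule ℝ V)
    (v : V) (hvN : v ∈ TNᗮ) (hvT : v ∈ T)
    (R : ℝ → V →ₗ[ℝ] V)
    (hRT : ∀ t : ℝ, ∀ w ∈ T, R t w = 0)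
    (hRTperp : ∀ t : ℝ, ∀ w ∈ Tᗮ, R t w ∈ Tᗮ)
    (A : V →ₗ[ℝ] V)
    (J : ℝ → V) (hsm : ContDiff ℝ 2 J)
    (hJacobi : ∀ t : ℝ, deriv (deriv J) t + R t (J t) = 0)
    (hNJ0 : J 0 ∈ TN) (hNJ : deriv J 0 + A (J 0) ∈ TNᗮ)
    (t₀ : ℝ) (ht₀ : 0 < t₀) (hz : J t₀ = 0)
    (h0 : J 0 ∈ Tᗮ) :
    ∀ t : ℝ, J t ∈ Tᗮ := by
  classical
  set Q : V →L[ℝ] V := T.subtypeL.comp (T.orthogonalProjectionOnto) with hQdef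
  have hQmem : ∀ w : V, Q w ∈ T := fun w => (T.orthogonalProjectionOnto w).2
  have hQperp : ∀ w ∈ Tᗮ, Q w = 0 := by
    intro w hw
    simp [hQdef, Submodule.orthogonalProjectionOnto_apply_of_mem_orthogonal hw]
  have hsub : ∀ w : V, w - Q w ∈ Tᗮ := fun w => T.sub_starProjection_mem_orthogonal w
  have hQR : ∀ t : ℝ, Q (R t (J t)) = 0 := by
    intro t
    have hsplit : R t (J t) = R t (Q (J t)) + R t (J t - Q (J t)) := by
      rw [← map_add]; congr 1; abel
    rw [hsplit, hRT t _ (hQmem (J t)), zero_add]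
    exact hQperp _ (hRTperp t _ (hsub (J t)))
  have hJd : Differentiable ℝ J := hsm.differentiable (by norm_num)
  have hJ'cd : ContDiff ℝ 1 (deriv J) := by
    exact (contDiff_succ_iff_deriv.mp (show ContDiff ℝ (1 + 1) J from hsm)).2.2
  have hJ'd : Differentiable ℝ (deriv J) := hJ'cd.differentiable one_ne_zero
  set f : ℝ → V := fun t => Q (J t) with hfdef
  have hf' : ∀ t, HasDerivAt f (Q (deriv J t)) t := fun t =>
    Q.hasFDerivAt.comp_hasDerivAt t (hJd t).hasDerivAt
  have hfderiv : deriv f = fun t => Q (deriv J t) := funext fun t => (hf' t).deriv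
  have hf'' : ∀ t, HasDerivAt (deriv f) 0 t := by
    intro t
    rw [hfderiv]
    have h1 : HasDerivAt (fun s => Q (deriv J s)) (Q (deriv (deriv J) t)) t :=
      Q.hasFDerivAt.comp_hasDerivAt t (hJ'd t).hasDerivAt
    have h2 : Q (deriv (deriv J) t) = 0 := by
      have : deriv (deriv J) t = -(R t (J t)) := by
        have h := hJacobi t
        linear_combination (norm := abel) h
      rw [this, map_neg, hQR, neg_zero]
    rwa [h2] at h1
  have hconst : ∀ t, deriv f t = deriv f 0 := by
    intro t
    exact is_const_of_deriv_eq_zero (fun s => (hf'' s).differentiableAt)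
      (fun s => (hf'' s).deriv) t 0
  set c : V := deriv f 0 with hcdef
  have hg : ∀ t : ℝ, f t - t • c = f 0 := by
    intro t
    have hgd : ∀ s : ℝ, HasDerivAt (fun u : ℝ => f u - u • c) 0 s := by
      intro s
      have h1 : HasDerivAt f c s := by
        have := hf' s
        rwa [show Q (deriv J s) = c by rw [← (hf' s).deriv, hconst s]] at this
      have h2 : HasDerivAt (fun u : ℝ => u • c) c s := by
        simpa using (hasDerivAt_id s).smul_const c
      have := h1.sub h2
      rwa [sub_self] at this
    have := is_const_of_deriv_eq_zero (f := fun u : ℝ => f u - u • c)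
      (fun s => (hgd s).differentiableAt) (fun s => (hgd s).deriv) t 0
    simpa using this
  have hf0 : f 0 = 0 := hQperp _ h0
  have hft : ∀ t : ℝ, f t = t • c := by
    intro t
    have := hg t
    rw [hf0, sub_eq_zero] at this
    exact this
  have hc : c = 0 := by
    have h1 : f t₀ = 0 := by simp [hfdef, hz]
    have h2 := hft t₀
    rw [h1] at h2
    have := h2.symm
    exact (smul_eq_zero.mp this).resolve_left (ne_of_gt ht₀)
  intro t
  have hQJ : Q (J t) = 0 := by
    have := hft t
    rw [hc, smul_zero] at this
    exact this
  have := hsub (J t)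
  rwa [hQJ, sub_zero] at this
end

section
/- Let G be a compact Lie group acting by orthogonal transformations on a Euclidean space V, let N = Gp be a principal orbit with second fundamental form α, and let U_p ⊆ T_pN be a subspace invariant under all shape operators A_v, v ∈ ν_p(N). Suppose U_p has the property that for every v ∈ ν_p(N) and every eigenvector u of A_v with nonzero eigenvalue λ that is orthogonal to U_p, one has u ∈ T_p(G_q p) with q = p + (1/λ)v. Then every subspace D_p of T_pN with this same property that is additionally invariant under all shape operators contains the canonical subspace U_p⁰, defined as the span, over all v ∈ ν_pN and nonzero eigenvalues λ of A_v, of the orthogonal complement of T_p(G_q p) in the λ-eigenspace of A_v (q = p + (1/λ)v). -/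
open scoped RealInnerProductSpace

/-- Let `G` act orthogonally on a Euclidean space `V`, let
`N = Gp` be a principal orbit with tangent space `TpN` and shape operators
`A v` (symmetric, for `v ∈ ν_p(N) = TpNᗮ`), and let `Torb q` denote the
tangent space `T_p(G_q p)` of the orbit of `p` under the isotropy group of
`q`.  Property (P_Euc) of a subspace `W` says: for every `v ∈ ν_p(N)` and
every eigenvector `u` of `A v` with nonzero eigenvalue `l` orthogonal to `W`,
one has `u ∈ Torb (p + (1/l) v)`.  Suppose `U ⊆ TpN` is a subspace with
property (P_Euc) which is invariant under all shape operators.  Then every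
subspace `D` with property (P_Euc) that is invariant under all shape operators
contains the canonical subspace `U0`, the span over all `v` and nonzero
eigenvalues `l` of the orthogonal complement of `Torb (p + (1/l) v)` inside
the `l`-eigenspace of `A v`. -/
theorem canonical_subspace_minimal
    {V : Type*} [NormedAddCommGroup V] [InnerProductSpace ℝ V] [FiniteDimensional ℝ V]
    (p : V) (TpN : Submodule ℝ V)
    (A : V → (V →ₗ[ℝ] V))
    (hAsymm : ∀ v ∈ TpNᗮ, ∀ x y : V, ⟪A v x, y⟫ = ⟪x, A v y⟫)
    (hAtan : ∀ v ∈ TpNᗮ, ∀ w ∈ TpN, A v w ∈ TpN)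
    (Torb : V → Submodule ℝ V)
    (U : Submodule ℝ V) (hU : U ≤ TpN)
    (hUinv : ∀ v ∈ TpNᗮ, ∀ u ∈ U, A v u ∈ U)
    (hUP : ∀ v ∈ TpNᗮ, ∀ (u : V) (l : ℝ), l ≠ 0 → A v u = l • u →
      (∀ w ∈ U, ⟪u, w⟫ = 0) → u ∈ Torb (p + l⁻¹ • v))
    (U0 : Submodule ℝ V)
    (hU0 : U0 = Submodule.span ℝ {u : V | ∃ v ∈ TpNᗮ, ∃ l : ℝ,
      l ≠ 0 ∧ A v u = l • u ∧ ∀ w ∈ Torb (p + l⁻¹ • v), ⟪u, w⟫ = 0})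
    (D : Submodule ℝ V)
    (hDinv : ∀ v ∈ TpNᗮ, ∀ d ∈ D, A v d ∈ D)
    (hDP : ∀ v ∈ TpNᗮ, ∀ (u : V) (l : ℝ), l ≠ 0 → A v u = l • u →
      (∀ w ∈ D, ⟪u, w⟫ = 0) → u ∈ Torb (p + l⁻¹ • v)) :
    U0 ≤ D := by
  rw [hU0, Submodule.span_le]
  rintro u ⟨v, hv, l, hl, heig, horth⟩
  set u₁ : V := (D.orthogonalProjectionOnto u : V) with hu1
  set u₂ : V := u - u₁ with hu2
  have hu1D : u₁ ∈ D := (D.orthogonalProjectionOnto u).2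
  have hu2orth : u₂ ∈ Dᗮ := D.sub_starProjection_mem_orthogonal u
  -- A v u₂ = l • u₂
  have hu2o : ∀ w ∈ D, ⟪u₂, w⟫ = 0 := fun w hw =>
    (Submodule.mem_orthogonal' D u₂).mp hu2orth w hw
  have hAu2orth : A v u₂ ∈ Dᗮ := by
    rw [Submodule.mem_orthogonal']
    intro d hd
    rw [hAsymm v hv]
    exact hu2o (A v d) (hDinv v hv d hd)
  have hdec : A v u₂ - l • u₂ = l • u₁ - A v u₁ := by
    have : A v u₁ + A v u₂ = l • u₁ + l • u₂ := by
      rw [← map_add, ← smul_add]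
      have : u₁ + u₂ = u := by simp [hu2]
      rw [this, heig]
    rw [sub_eq_sub_iff_add_eq_add, add_comm (A v u₂), this, add_comm]
  have hmemD : A v u₂ - l • u₂ ∈ D := by
    rw [hdec]; exact D.sub_mem (D.smul_mem l hu1D) (hDinv v hv u₁ hu1D)
  have hmemDo : A v u₂ - l • u₂ ∈ Dᗮ := Dᗮ.sub_mem hAu2orth (Dᗮ.smul_mem l hu2orth)
  have heig2 : A v u₂ = l • u₂ := by
    have := (Submodule.mem_inf.mpr ⟨hmemD, hmemDo⟩)
    rw [Submodule.inf_orthogonal_eq_bot, Submodule.mem_bot] at this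
    exact sub_eq_zero.mp this
  -- u₂ = 0
  have hu2zero : u₂ = 0 := by
    by_contra h
    have hmem : u₂ ∈ Torb (p + l⁻¹ • v) :=
      hDP v hv u₂ l hl heig2 hu2o
    have h0 : ⟪u, u₂⟫ = 0 := horth u₂ hmem
    have h1 : ⟪u₁, u₂⟫ = 0 := by
      rw [real_inner_comm]; exact hu2o u₁ hu1D
    have : ⟪u₂, u₂⟫ = 0 := by
      have : u = u₁ + u₂ := by simp [hu2]
      rw [this, inner_add_left, h1] at h0
      linarith
    exact h (inner_self_eq_zero.mp this)
  have : u = u₁ := by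
    have := hu2zero
    rw [hu2, sub_eq_zero] at this
    exact this
  rw [this]; exact hu1D
end

section
/- Let G be a compact Lie group acting by orthogonal transformations on a Euclidean space V, and let Σ be a k-section such that for every q ∈ Σ, the isotropy group G_q is transitive on the G-translates of Σ through q, and such that at each G-regular point the translates through regular points are unique. Then for every q ∈ Σ, the orbit of q under the stabilizer G_Σ = {g ∈ G : gΣ = Σ} equals Gq ∩ Σ. -/
/-- A point `x` is a regular point of the orthogonal action `ρ` of `G` on `V`
if its isotropy group is minimal up to conjugacy. -/
def IsRegPt {G V : Type*} [Group G] [NormedAddCommGroup V] [InnerProductSpace ℝ V]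
    (ρ : G →* (V ≃ₗᵢ[ℝ] V)) (x : V) : Prop :=
  ∀ q : V, ∃ g : G, ∀ h : G, ρ h x = x → ρ (g⁻¹ * h * g) q = q

/-- Let a compact Lie group `G` act orthogonally on a
Euclidean space `V` (via `ρ`, with Lie algebra of Killing generators `𝔤`), and
let `Sig` be a linear `k`-section: it meets every orbit (`hmeets`), contains
the normal spaces at its regular points (`hC3`), satisfies condition (C4)
(`hC4`: for regular `x ∈ Sig` with `ρ g x ∈ Sig` one has `g Sig = Sig`, which
is the uniqueness of translates through regular points), and for every
`q' ∈ Sig` the isotropy group `G_{q'}` is transitive on the `G`-translates of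
`Sig` through `q'` (`htrans`).  Then for every `q ∈ Sig`, the orbit of `q`
under the stabilizer `G_Sig = {g : G | g Sig = Sig}` equals `Gq ∩ Sig`. -/
theorem stabilizer_orbit_eq_orbit_inter_section
    {G V : Type*} [Group G] [TopologicalSpace G] [IsTopologicalGroup G] [CompactSpace G]
    [NormedAddCommGroup V] [InnerProductSpace ℝ V] [FiniteDimensional ℝ V]
    (ρ : G →* (V ≃ₗᵢ[ℝ] V))
    (𝔤 : Set (V →ₗ[ℝ] V))
    (Sig : Submodule ℝ V)
    (hmeets : ∀ x : V, ∃ g : G, ρ g x ∈ Sig)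
    (hC3 : ∀ x ∈ Sig, IsRegPt ρ x →
      (Submodule.span ℝ {w : V | ∃ X ∈ 𝔤, w = X x})ᗮ ≤ Sig)
    (hC4 : ∀ x ∈ Sig, IsRegPt ρ x → ∀ g : G, ρ g x ∈ Sig →
      ∀ s : V, s ∈ Sig ↔ ρ g s ∈ Sig)
    (htrans : ∀ q' ∈ Sig, ∀ g₁ g₂ : G, q' ∈ (fun x => ρ g₁ x) '' (Sig : Set V) →
      q' ∈ (fun x => ρ g₂ x) '' (Sig : Set V) →
      ∃ h : G, ρ h q' = q' ∧
        (fun x => ρ h x) '' ((fun x => ρ g₁ x) '' (Sig : Set V))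
          = (fun x => ρ g₂ x) '' (Sig : Set V)) :
    ∀ q ∈ Sig,
      {x : V | ∃ g : G, (∀ s : V, s ∈ Sig ↔ ρ g s ∈ Sig) ∧ ρ g q = x}
        = {x : V | (∃ g : G, ρ g q = x) ∧ x ∈ Sig} := by
  intro q hq
  ext x
  simp only [Set.mem_setOf_eq]
  constructor
  · rintro ⟨g, hg, rfl⟩
    exact ⟨⟨g, rfl⟩, (hg q).mp hq⟩
  · rintro ⟨⟨g, rfl⟩, hx⟩
    obtain ⟨h, hhx, hset⟩ := htrans (ρ g q) hx g 1 ⟨q, hq, rfl⟩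
      ⟨ρ g q, hx, by simp⟩
    simp only [map_one, LinearIsometryEquiv.coe_one, id_eq, Set.image_id'] at hset
    refine ⟨h * g, fun s => ?_, by simp [hhx]⟩
    constructor
    · intro hs
      have : ρ (h * g) s ∈ (fun x => ρ h x) '' ((fun x => ρ g x) '' (Sig : Set V)) :=
        ⟨ρ g s, ⟨s, hs, rfl⟩, by simp⟩
      rwa [hset] at this
    · intro hs
      have hs' : ρ (h * g) s ∈ (fun x => ρ h x) '' ((fun x => ρ g x) '' (Sig : Set V)) := by
        rw [hset]; exact hs
      obtain ⟨t, ⟨u, hu, rfl⟩, ht⟩ := hs'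
      have : ρ (h * g) u = ρ (h * g) s := by simpa using ht
      have := (ρ (h * g)).injective this
      rwa [← this]
end
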